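/- Let θ > 0, λ ∈ ℝ, α < β, and let b, σ, h, k₊, k₋ : ℝ → ℝ be continuous with σ(x)² > 0 for all x ∈ ℝ, and set q(x) = exp(∫₀ˣ 2b(y)/σ(y)² dy). Suppose u : ℝ → ℝ is twice continuously differentiable on [α,β], satisfies (1/2)σ(x)²u''(x) + b(x)u'(x) + θ(h(x) − λ)u(x) = 0 for all x ∈ [α,β], the boundary conditions θk₊(α)u(α) + u'(α) = 0 and θk₋(β)u(β) − u'(β) = 0, and the normalization ∫_α^β (2θq(y)/σ(y)²)u(y)² dy = 1. Then λ = θ(q(α)k₊(α)u(α)² + q(β)k₋(β)u(β)²) + ∫_α^β q(y)[(2θh(y)/σ(y)²)u(y)² − u'(y)²] dy. -/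

import Mathlib

open Set intervalIntegral

/-- the representation formula (3.10) for the principal
Sturm–Liouville eigenvalue `λ(α, β, θ)` in terms of the normalised
eigenfunction. -/
theorem eigenvalue_representation_formula
    (θ lam α β : ℝ) (hθ : 0 < θ) (hαβ : α < β)
    (b σ h kp km : ℝ → ℝ)
    (hbc : Continuous b) (hσc : Continuous σ) (hhc : Continuous h)
    (hkpc : Continuous kp) (hkmc : Continuous km)
    (hσpos : ∀ x : ℝ, 0 < (σ x) ^ 2)
    (q : ℝ → ℝ)
    (hq : ∀ x : ℝ, q x = Real.exp (∫ y in (0 : ℝ)..x, 2 * b y / (σ y) ^ 2))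
    (u : ℝ → ℝ)
    (hu1 : ∀ x ∈ Icc α β, DifferentiableAt ℝ u x)
    (hu2 : ∀ x ∈ Icc α β, DifferentiableAt ℝ (deriv u) x)
    (hu2c : ContinuousOn (deriv (deriv u)) (Icc α β))
    (hODE : ∀ x ∈ Icc α β,
      (1 / 2) * (σ x) ^ 2 * deriv (deriv u) x + b x * deriv u x
        + θ * (h x - lam) * u x = 0)
    (hbcα : θ * kp α * u α + deriv u α = 0)
    (hbcβ : θ * km β * u β - deriv u β = 0)
    (hnorm : ∫ y in α..β, (2 * θ * q y / (σ y) ^ 2) * (u y) ^ 2 = 1) :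
    lam = θ * (q α * kp α * (u α) ^ 2 + q β * km β * (u β) ^ 2)
      + ∫ y in α..β,
          q y * ((2 * θ * h y / (σ y) ^ 2) * (u y) ^ 2 - (deriv u y) ^ 2) := by
  have hσne : ∀ x, (σ x) ^ 2 ≠ 0 := fun x => (hσpos x).ne'
  set g : ℝ → ℝ := fun x => 2 * b x / σ x ^ 2 with hgdef
  have hgc : Continuous g := ((continuous_const.mul hbc)).div (hσc.pow 2) hσne
  -- q has derivative q * g everywhere
  have hqd : ∀ x : ℝ, HasDerivAt q (q x * g x) x := by
    intro x
    have h1 : HasDerivAt (fun t => ∫ y in (0 : ℝ)..t, g y) (g x) x :=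
      integral_hasDerivAt_right (hgc.intervalIntegrable 0 x)
        hgc.aestronglyMeasurable.stronglyMeasurableAtFilter hgc.continuousAt
    have h2 := h1.exp
    have hfun : (fun t => Real.exp (∫ y in (0 : ℝ)..t, g y)) = q := by
      funext t; rw [hq t]
    rw [hfun, ← hq x] at h2
    exact h2
  have hqdiff : Differentiable ℝ q := fun x => (hqd x).differentiableAt
  have hqc : Continuous q := hqdiff.continuous
  have hαβ' : α ≤ β := hαβ.le
  have hIcc : Set.uIcc α β = Icc α β := uIcc_of_le hαβ'
  -- continuity of u and deriv u on Icc
  have huc : ContinuousOn u (Icc α β) := fun x hx => ((hu1 x hx).continuousAt).continuousWithinAt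
  have hu'c : ContinuousOn (deriv u) (Icc α β) :=
    fun x hx => ((hu2 x hx).continuousAt).continuousWithinAt
  -- F = q * u' * u has derivative φ on Icc
  set F : ℝ → ℝ := fun x => q x * (deriv u x * u x) with hF
  set φ : ℝ → ℝ := fun x =>
    q x * (deriv u x) ^ 2 - 2 * θ * (h x - lam) / σ x ^ 2 * q x * u x ^ 2 with hφ
  have hFd : ∀ x ∈ Set.uIcc α β, HasDerivAt F (φ x) x := by
    intro x hx
    rw [hIcc] at hx
    have hdu : HasDerivAt u (deriv u x) x := (hu1 x hx).hasDerivAt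
    have hddu : HasDerivAt (deriv u) (deriv (deriv u) x) x := (hu2 x hx).hasDerivAt
    have hprod := (hqd x).mul (hddu.mul hdu)
    have key : q x * g x * (deriv u x * u x)
        + q x * (deriv (deriv u) x * u x + deriv u x * deriv u x) = φ x := by
      have hode := hODE x hx
      have hσx : σ x ≠ 0 := fun hh => (hσne x) (by rw [hh]; ring)
      simp only [hφ, hgdef]
      field_simp
      linear_combination (2 * q x * u x) * hode
    rw [Pi.mul_apply, key] at hprod
    exact hprod
  have hφcont : ContinuousOn φ (Icc α β) := by
    apply ContinuousOn.sub
    · exact (hqc.continuousOn.mul (hu'c.pow 2))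
    · exact (((continuous_const.mul (hhc.sub continuous_const)).continuousOn.div
        ((hσc.pow 2).continuousOn) (fun x _ => hσne x)).mul hqc.continuousOn).mul
        (huc.pow 2)
  have hφint : IntervalIntegrable φ MeasureTheory.volume α β := by
    apply ContinuousOn.intervalIntegrable; rwa [hIcc]
  have hFTC : ∫ y in α..β, φ y = F β - F α :=
    intervalIntegral.integral_eq_sub_of_hasDerivAt hFd hφint
  -- split φ = -(goal integrand) + lam * (norm integrand)
  set ψ : ℝ → ℝ := fun y => q y * (2 * θ * h y / σ y ^ 2 * u y ^ 2 - (deriv u y) ^ 2) with hψ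
  set η : ℝ → ℝ := fun y => 2 * θ * q y / σ y ^ 2 * u y ^ 2 with hη
  have hψcont : ContinuousOn ψ (Icc α β) := by
    apply hqc.continuousOn.mul
    apply ContinuousOn.sub
    · exact (((continuous_const.mul hhc).continuousOn.div (hσc.pow 2).continuousOn
        (fun x _ => hσne x)).mul (huc.pow 2))
    · exact hu'c.pow 2
  have hηcont : ContinuousOn η (Icc α β) := by
    apply ContinuousOn.mul _ (huc.pow 2)
    exact ((continuous_const.mul hqc).continuousOn.div (hσc.pow 2).continuousOn
      (fun x _ => hσne x))
  have hψint : IntervalIntegrable ψ MeasureTheory.volume α β := by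
    apply ContinuousOn.intervalIntegrable; rwa [hIcc]
  have hηint : IntervalIntegrable η MeasureTheory.volume α β := by
    apply ContinuousOn.intervalIntegrable; rwa [hIcc]
  have hsplit : ∀ y, φ y = -(ψ y) + lam * η y := by
    intro y
    simp only [hφ, hψ, hη]
    field_simp
    ring
  have hint_eq : ∫ y in α..β, φ y = -(∫ y in α..β, ψ y) + lam * ∫ y in α..β, η y :=
    calc ∫ y in α..β, φ y = ∫ y in α..β, (-(ψ y) + lam * η y) := by
          simp only [hsplit]
      _ = (∫ y in α..β, -(ψ y)) + ∫ y in α..β, lam * η y :=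
          intervalIntegral.integral_add hψint.neg (hηint.const_mul lam)
      _ = -(∫ y in α..β, ψ y) + lam * ∫ y in α..β, η y := by
          rw [intervalIntegral.integral_neg, intervalIntegral.integral_const_mul]
  rw [hint_eq, hnorm] at hFTC
  have hFα : F α = q α * (-(θ * kp α * u α) * u α) := by
    simp only [hF]; rw [show deriv u α = -(θ * kp α * u α) by linarith]
  have hFβ : F β = q β * (θ * km β * u β * u β) := by
    simp only [hF]; rw [show deriv u β = θ * km β * u β by linarith]
  have : ∫ y in α..β, ψ y =
      ∫ y in α..β, q y * (2 * θ * h y / σ y ^ 2 * u y ^ 2 - (deriv u y) ^ 2) := rfl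
  rw [hFα, hFβ] at hFTC
  rw [← this]
  linear_combination hFTC
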